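/- For p, q > 1 and r, s ∈ (0,1), one has arcsin_{p,q}(r·s) ≤ √(arcsin_{p,q}(r²)·arcsin_{p,q}(s²)) ≤ arcsin_{p,q}(r)·arcsin_{p,q}(s). -/

import Mathlib

open Real Set

noncomputable def arcsinpq (p q x : ℝ) : ℝ :=
  ∫ t in (0:ℝ)..x, (1 - t ^ q) ^ (-1/p)

open MeasureTheory

variable {p q : ℝ}

lemma apq_base_pos (hq : 1 < q) {t : ℝ} (h0 : 0 ≤ t) (h1 : t < 1) : 0 < 1 - t ^ q := by
  have : t ^ q < 1 := by
    rcases eq_or_lt_of_le h0 with h | h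
    · rw [← h, Real.zero_rpow (by linarith)]; norm_num
    · exact Real.rpow_lt_one h0 h1 (by linarith)
  linarith

lemma apq_f_one_le (hp : 1 < p) (hq : 1 < q) {t : ℝ} (h0 : 0 ≤ t) (h1 : t < 1) :
    1 ≤ (1 - t ^ q) ^ (-1/p) := by
  apply Real.one_le_rpow_of_pos_of_le_one_of_nonpos (apq_base_pos hq h0 h1)
  · have := Real.rpow_nonneg h0 q; linarith
  · rw [neg_div, neg_nonpos]; positivity

lemma apq_f_mono (hp : 1 < p) (hq : 1 < q) {t₁ t₂ : ℝ} (h0 : 0 ≤ t₁) (h12 : t₁ ≤ t₂)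
    (h1 : t₂ < 1) : (1 - t₁ ^ q) ^ (-1/p) ≤ (1 - t₂ ^ q) ^ (-1/p) := by
  apply Real.rpow_le_rpow_of_nonpos (apq_base_pos hq (h0.trans h12) h1)
  · have := Real.rpow_le_rpow h0 h12 (by linarith : (0:ℝ) ≤ q); linarith
  · rw [neg_div, neg_nonpos]; positivity

lemma apq_f_contOn (hq : 1 < q) {c : ℝ} (hc : c < 1) :
    ContinuousOn (fun t : ℝ => (1 - t ^ q) ^ (-1/p)) (Icc 0 c) := by
  intro t ht
  apply ContinuousAt.continuousWithinAt
  have h1 : ContinuousAt (fun t : ℝ => 1 - t ^ q) t :=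
    continuousAt_const.sub (Real.continuousAt_rpow_const t q (Or.inr (by linarith)))
  have hpos : 0 < 1 - t ^ q := apq_base_pos hq ht.1 (lt_of_le_of_lt ht.2 hc)
  exact ContinuousAt.comp (g := fun u : ℝ => u ^ (-1/p))
    (Real.continuousAt_rpow_const _ _ (Or.inl (ne_of_gt hpos))) h1

lemma apq_f_intble (hq : 1 < q) {x : ℝ} (h0 : 0 ≤ x) (h1 : x < 1) :
    IntervalIntegrable (fun t : ℝ => (1 - t ^ q) ^ (-1/p)) volume 0 x := by
  apply ContinuousOn.intervalIntegrable
  rw [uIcc_of_le h0]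
  exact apq_f_contOn hq h1

lemma apq_scale (p q a x : ℝ) :
    arcsinpq p q (a * x) = a * ∫ u in (0:ℝ)..x, (1 - (a * u) ^ q) ^ (-1/p) := by
  have h := intervalIntegral.smul_integral_comp_mul_left
    (f := fun t : ℝ => (1 - t ^ q) ^ (-1/p)) (a := 0) (b := x) a
  rw [mul_zero] at h
  rw [arcsinpq, ← h, smul_eq_mul]

lemma apq_self_le (hp : 1 < p) (hq : 1 < q) {x : ℝ} (h0 : 0 ≤ x) (h1 : x < 1) :
    x ≤ arcsinpq p q x := by
  have : x = ∫ _t in (0:ℝ)..x, (1:ℝ) := by simp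
  conv_lhs => rw [this]
  rw [arcsinpq]
  apply intervalIntegral.integral_mono_on h0 intervalIntegrable_const (apq_f_intble hq h0 h1)
  intro t ht
  exact apq_f_one_le hp hq ht.1 (lt_of_le_of_lt ht.2 h1)

lemma apq_nonneg (hp : 1 < p) (hq : 1 < q) {x : ℝ} (h0 : 0 ≤ x) (h1 : x < 1) :
    0 ≤ arcsinpq p q x := h0.trans (apq_self_le hp hq h0 h1)

lemma apq_sq_le (hp : 1 < p) (hq : 1 < q) {x : ℝ} (hx : x ∈ Ioo (0:ℝ) 1) :
    arcsinpq p q (x ^ 2) ≤ arcsinpq p q x * arcsinpq p q x := by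
  obtain ⟨hx0, hx1⟩ := hx
  have key : arcsinpq p q (x ^ 2) ≤ x * arcsinpq p q x := by
    rw [pow_two, apq_scale, arcsinpq]
    apply mul_le_mul_of_nonneg_left _ hx0.le
    apply intervalIntegral.integral_mono_on hx0.le _ (apq_f_intble hq hx0.le hx1)
    · intro t ht
      exact apq_f_mono hp hq (mul_nonneg hx0.le ht.1) (by nlinarith [ht.1, ht.2] : x * t ≤ t)
        (lt_of_le_of_lt ht.2 hx1)
    · apply ContinuousOn.intervalIntegrable
      rw [uIcc_of_le hx0.le]
      apply (apq_f_contOn hq hx1).comp (continuous_const.mul continuous_id).continuousOn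
      intro t ht
      simp only [Pi.mul_apply, id_eq]
      exact ⟨mul_nonneg hx0.le ht.1, by nlinarith [ht.1, ht.2]⟩
  refine key.trans ?_
  exact mul_le_mul_of_nonneg_right (apq_self_le hp hq hx0.le hx1)
    (apq_nonneg hp hq hx0.le hx1)

/-- The scaled integrand. -/
noncomputable def apqF (p q a u : ℝ) : ℝ := (1 - (a * u) ^ q) ^ (-1/p)

lemma apqF_contOn (hq : 1 < q) {a : ℝ} (ha0 : 0 ≤ a) (ha1 : a < 1) :
    ContinuousOn (apqF p q a) (Icc 0 1) := by
  apply (apq_f_contOn hq ha1).comp (continuous_const.mul continuous_id).continuousOn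
  intro u hu
  simp only [Pi.mul_apply, id_eq]
  exact ⟨mul_nonneg ha0 hu.1, by nlinarith [hu.1, hu.2]⟩

lemma apqF_bounds (hp : 1 < p) (hq : 1 < q) {a : ℝ} (ha0 : 0 ≤ a) (ha1 : a < 1)
    {u : ℝ} (hu : u ∈ Ioc (0:ℝ) 1) :
    1 ≤ apqF p q a u ∧ apqF p q a u ≤ (1 - a ^ q) ^ (-1/p) := by
  have hau0 : 0 ≤ a * u := mul_nonneg ha0 hu.1.le
  have hau1 : a * u < 1 := by nlinarith [hu.1, hu.2]
  exact ⟨apq_f_one_le hp hq hau0 hau1,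
    apq_f_mono hp hq hau0 (by nlinarith [hu.1, hu.2]) ha1⟩

lemma apqF_intOn (hq : 1 < q) {a : ℝ} (ha0 : 0 ≤ a) (ha1 : a < 1) :
    IntegrableOn (apqF p q a) (Ioc 0 1) volume :=
  ((apqF_contOn hq ha0 ha1).integrableOn_Icc).mono_set Ioc_subset_Icc_self

lemma apqF_int_nonneg (hp : 1 < p) (hq : 1 < q) {a : ℝ} (ha0 : 0 ≤ a) (ha1 : a < 1) :
    0 ≤ ∫ u in Ioc (0:ℝ) 1, apqF p q a u :=
  setIntegral_nonneg measurableSet_Ioc fun _ hu =>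
    le_trans zero_le_one (apqF_bounds hp hq ha0 ha1 hu).1

lemma apqF_memℒp (hp : 1 < p) (hq : 1 < q) {a : ℝ} (ha0 : 0 ≤ a) (ha1 : a < 1) :
    MemLp (fun u => Real.sqrt (apqF p q a u)) (ENNReal.ofReal 2)
      (volume.restrict (Ioc (0:ℝ) 1)) := by
  apply MemLp.of_bound (C := Real.sqrt ((1 - a ^ q) ^ (-1/p)))
  · exact ((Real.continuous_sqrt.comp_continuousOn (apqF_contOn hq ha0 ha1)).mono
      Ioc_subset_Icc_self).aestronglyMeasurable measurableSet_Ioc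
  · filter_upwards [ae_restrict_mem measurableSet_Ioc] with u hu
    rw [Real.norm_eq_abs, abs_of_nonneg (Real.sqrt_nonneg _)]
    exact Real.sqrt_le_sqrt (apqF_bounds hp hq ha0 ha1 hu).2

lemma apqF_holder (hp : 1 < p) (hq : 1 < q) {a b : ℝ} (ha0 : 0 ≤ a) (ha1 : a < 1)
    (hb0 : 0 ≤ b) (hb1 : b < 1) :
    ∫ u in Ioc (0:ℝ) 1, Real.sqrt (apqF p q a u) * Real.sqrt (apqF p q b u) ≤
      (∫ u in Ioc (0:ℝ) 1, apqF p q a u) ^ ((1:ℝ)/2) *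
        (∫ u in Ioc (0:ℝ) 1, apqF p q b u) ^ ((1:ℝ)/2) := by
  have hconj : Real.HolderConjugate 2 2 := Real.HolderConjugate.two_two
  have hCS := MeasureTheory.integral_mul_le_Lp_mul_Lq_of_nonneg hconj
    (μ := volume.restrict (Ioc (0:ℝ) 1))
    (f := fun u => Real.sqrt (apqF p q a u)) (g := fun u => Real.sqrt (apqF p q b u))
    (Filter.Eventually.of_forall fun u => Real.sqrt_nonneg _)
    (Filter.Eventually.of_forall fun u => Real.sqrt_nonneg _)
    (apqF_memℒp hp hq ha0 ha1) (apqF_memℒp hp hq hb0 hb1)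
  have hsq : ∀ c : ℝ, 0 ≤ c → c < 1 →
      (∫ u in Ioc (0:ℝ) 1, Real.sqrt (apqF p q c u) ^ (2:ℝ))
        = ∫ u in Ioc (0:ℝ) 1, apqF p q c u := by
    intro c hc0 hc1
    apply setIntegral_congr_fun measurableSet_Ioc
    intro u hu
    have h1 : (0:ℝ) ≤ apqF p q c u :=
      le_trans zero_le_one (apqF_bounds hp hq hc0 hc1 hu).1
    show Real.sqrt (apqF p q c u) ^ (2:ℝ) = apqF p q c u
    rw [show ((2:ℝ)) = ((2:ℕ) : ℝ) by norm_num, Real.rpow_natCast, Real.sq_sqrt h1]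
  rw [hsq a ha0 ha1, hsq b hb0 hb1] at hCS
  exact hCS

lemma apqF_pointwise (hp : 1 < p) (hq : 1 < q) {r s : ℝ} (hr : r ∈ Ioo (0:ℝ) 1)
    (hs : s ∈ Ioo (0:ℝ) 1) {u : ℝ} (hu : u ∈ Ioc (0:ℝ) 1) :
    apqF p q (r * s) u ≤ Real.sqrt (apqF p q (r ^ 2) u) * Real.sqrt (apqF p q (s ^ 2) u) := by
  obtain ⟨hr0, hr1⟩ := hr
  obtain ⟨hs0, hs1⟩ := hs
  have hu0 : 0 < u := hu.1
  have hu1 : u ≤ 1 := hu.2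
  have ha0 : (0:ℝ) ≤ (r ^ 2 * u) ^ q := Real.rpow_nonneg (by positivity) _
  have hb0 : (0:ℝ) ≤ (s ^ 2 * u) ^ q := Real.rpow_nonneg (by positivity) _
  have hc0 : (0:ℝ) ≤ (r * s * u) ^ q := Real.rpow_nonneg (by positivity) _
  have hab : (r ^ 2 * u) ^ q * ((s ^ 2 * u) ^ q) = (r * s * u) ^ q * ((r * s * u) ^ q) := by
    rw [← Real.mul_rpow (by positivity) (by positivity),
      ← Real.mul_rpow (by positivity) (by positivity)]
    congr 1
    ring
  have h1a : 0 < 1 - (r ^ 2 * u) ^ q :=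
    apq_base_pos hq (by positivity) (by nlinarith)
  have h1b : 0 < 1 - (s ^ 2 * u) ^ q :=
    apq_base_pos hq (by positivity) (by nlinarith)
  have h1c : 0 < 1 - (r * s * u) ^ q :=
    apq_base_pos hq (by positivity) (by nlinarith [mul_pos hr0 hs0])
  have h2c : (r * s * u) ^ q + (r * s * u) ^ q ≤ (r ^ 2 * u) ^ q + (s ^ 2 * u) ^ q := by
    have hcs : (r * s * u) ^ q = Real.sqrt ((r ^ 2 * u) ^ q) * Real.sqrt ((s ^ 2 * u) ^ q) := by
      rw [← Real.sqrt_mul ha0, hab, Real.sqrt_mul_self hc0]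
    nlinarith [sq_nonneg (Real.sqrt ((r ^ 2 * u) ^ q) - Real.sqrt ((s ^ 2 * u) ^ q)),
      Real.sq_sqrt ha0, Real.sq_sqrt hb0]
  have hYX : (1 - (r ^ 2 * u) ^ q) * (1 - (s ^ 2 * u) ^ q) ≤
      (1 - (r * s * u) ^ q) * (1 - (r * s * u) ^ q) := by nlinarith [hab, h2c]
  have key : ((1 - (r * s * u) ^ q) * (1 - (r * s * u) ^ q)) ^ (-1/p) ≤
      ((1 - (r ^ 2 * u) ^ q) * (1 - (s ^ 2 * u) ^ q)) ^ (-1/p) :=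
    Real.rpow_le_rpow_of_nonpos (by positivity) hYX (by rw [neg_div, neg_nonpos]; positivity)
  calc apqF p q (r * s) u
      = Real.sqrt (((1 - (r * s * u) ^ q) * (1 - (r * s * u) ^ q)) ^ (-1/p)) := by
        rw [Real.mul_rpow h1c.le h1c.le, Real.sqrt_mul_self (Real.rpow_nonneg h1c.le _)]
        rfl
    _ ≤ Real.sqrt (((1 - (r ^ 2 * u) ^ q) * (1 - (s ^ 2 * u) ^ q)) ^ (-1/p)) :=
        Real.sqrt_le_sqrt key
    _ = Real.sqrt (apqF p q (r ^ 2) u) * Real.sqrt (apqF p q (s ^ 2) u) := by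
        rw [apqF, apqF, ← Real.sqrt_mul (Real.rpow_nonneg h1a.le _),
          ← Real.mul_rpow h1a.le h1b.le]

lemma apq_eq_scaled (p q a : ℝ) :
    arcsinpq p q a = a * ∫ u in Ioc (0:ℝ) 1, apqF p q a u := by
  rw [show (a:ℝ) = a * 1 by ring, apq_scale,
    ← intervalIntegral.integral_of_le (zero_le_one)]
  ring_nf
  simp only [apqF]
  ring_nf

lemma apq_cs (hp : 1 < p) (hq : 1 < q) {r s : ℝ} (hr : r ∈ Ioo (0:ℝ) 1) (hs : s ∈ Ioo (0:ℝ) 1) :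
    arcsinpq p q (r * s) ≤ Real.sqrt (arcsinpq p q (r ^ 2) * arcsinpq p q (s ^ 2)) := by
  obtain ⟨hr0, hr1⟩ := hr
  obtain ⟨hs0, hs1⟩ := hs
  have hr2 : (0:ℝ) ≤ r ^ 2 := by positivity
  have hr21 : r ^ 2 < 1 := by nlinarith
  have hs2 : (0:ℝ) ≤ s ^ 2 := by positivity
  have hs21 : s ^ 2 < 1 := by nlinarith
  have hrs0 : (0:ℝ) ≤ r * s := by positivity
  have hrs1 : r * s < 1 := by nlinarith
  have hJle : (∫ u in Ioc (0:ℝ) 1, apqF p q (r * s) u) ≤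
      ∫ u in Ioc (0:ℝ) 1, Real.sqrt (apqF p q (r ^ 2) u) * Real.sqrt (apqF p q (s ^ 2) u) := by
    apply setIntegral_mono_on (apqF_intOn hq hrs0 hrs1) _ measurableSet_Ioc
    · exact fun u hu => apqF_pointwise hp hq ⟨hr0, hr1⟩ ⟨hs0, hs1⟩ hu
    · apply IntegrableOn.mono_set _ Ioc_subset_Icc_self
      apply ContinuousOn.integrableOn_Icc
      exact (Real.continuous_sqrt.comp_continuousOn (apqF_contOn hq hr2 hr21)).mul
        (Real.continuous_sqrt.comp_continuousOn (apqF_contOn hq hs2 hs21))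
  have hJI := hJle.trans (apqF_holder hp hq hr2 hr21 hs2 hs21)
  have hI₁0 := apqF_int_nonneg hp hq (p := p) hr2 hr21
  have hI₂0 := apqF_int_nonneg hp hq (p := p) hs2 hs21
  rw [apq_eq_scaled p q (r * s), apq_eq_scaled p q (r ^ 2), apq_eq_scaled p q (s ^ 2)]
  have hRHS : Real.sqrt (r ^ 2 * (∫ u in Ioc (0:ℝ) 1, apqF p q (r ^ 2) u) *
      (s ^ 2 * ∫ u in Ioc (0:ℝ) 1, apqF p q (s ^ 2) u)) =
      r * s * ((∫ u in Ioc (0:ℝ) 1, apqF p q (r ^ 2) u) ^ ((1:ℝ)/2) *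
        (∫ u in Ioc (0:ℝ) 1, apqF p q (s ^ 2) u) ^ ((1:ℝ)/2)) := by
    rw [show r ^ 2 * (∫ u in Ioc (0:ℝ) 1, apqF p q (r ^ 2) u) *
        (s ^ 2 * ∫ u in Ioc (0:ℝ) 1, apqF p q (s ^ 2) u) =
        (r * s) ^ 2 * ((∫ u in Ioc (0:ℝ) 1, apqF p q (r ^ 2) u) *
          ∫ u in Ioc (0:ℝ) 1, apqF p q (s ^ 2) u) by ring,
      Real.sqrt_mul (by positivity), Real.sqrt_sq hrs0,
      Real.sqrt_mul hI₁0, Real.sqrt_eq_rpow, Real.sqrt_eq_rpow]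
  rw [hRHS]
  exact mul_le_mul_of_nonneg_left hJI (by positivity)

theorem stmt9 (p q r s : ℝ) (hp : 1 < p) (hq : 1 < q)
    (hr : r ∈ Ioo (0:ℝ) 1) (hs : s ∈ Ioo (0:ℝ) 1) :
    arcsinpq p q (r * s) ≤ Real.sqrt (arcsinpq p q (r ^ 2) * arcsinpq p q (s ^ 2)) ∧
      Real.sqrt (arcsinpq p q (r ^ 2) * arcsinpq p q (s ^ 2)) ≤
        arcsinpq p q r * arcsinpq p q s := by
  have hr2 : (0:ℝ) ≤ r ^ 2 := by positivity
  have hr21 : r ^ 2 < 1 := by nlinarith [hr.1, hr.2]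
  have hs2 : (0:ℝ) ≤ s ^ 2 := by positivity
  have hs21 : s ^ 2 < 1 := by nlinarith [hs.1, hs.2]
  refine ⟨apq_cs hp hq hr hs, ?_⟩
  have h1 := apq_sq_le hp hq hr
  have h2 := apq_sq_le hp hq hs
  have har : 0 ≤ arcsinpq p q r := apq_nonneg hp hq hr.1.le hr.2
  have has : 0 ≤ arcsinpq p q s := apq_nonneg hp hq hs.1.le hs.2
  have hA : 0 ≤ arcsinpq p q (r ^ 2) := apq_nonneg hp hq hr2 hr21
  calc Real.sqrt (arcsinpq p q (r ^ 2) * arcsinpq p q (s ^ 2))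
      ≤ Real.sqrt ((arcsinpq p q r * arcsinpq p q r) * (arcsinpq p q s * arcsinpq p q s)) := by
        apply Real.sqrt_le_sqrt
        apply mul_le_mul h1 h2 (apq_nonneg hp hq hs2 hs21) (mul_nonneg har har)
    _ = arcsinpq p q r * arcsinpq p q s := by
        rw [show (arcsinpq p q r * arcsinpq p q r) * (arcsinpq p q s * arcsinpq p q s) =
          (arcsinpq p q r * arcsinpq p q s) * (arcsinpq p q r * arcsinpq p q s) by ring,
          Real.sqrt_mul_self (mul_nonneg har has)]
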